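/- For every q with 1 < q < 3, the integral C_q = ∫_{−∞}^{∞} e_q^{−x²} dx converges and equals √π · Γ((3−q)/(2(q−1))) / ( √(q−1) · Γ(1/(q−1)) ). -/

import Mathlib

open MeasureTheory Filter Real Topology

/-- The `q`-exponential `e_q^x = [1 + (1-q)x]_+^{1/(1-q)}` (with `e_1^x = e^x`). -/
noncomputable def qExp (q x : ℝ) : ℝ :=
  if q = 1 then Real.exp x else (max (1 + (1 - q) * x) 0) ^ (1 / (1 - q))

/-- The `q`-exponential of a complex argument, via the principal power. -/
noncomputable def qExpC (q : ℝ) (w : ℂ) : ℂ :=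
  if q = 1 then Complex.exp w else (1 + (1 - (q : ℂ)) * w) ^ ((1 : ℂ) / (1 - (q : ℂ)))

/-- The `q`-product on complex numbers, via principal powers. -/
noncomputable def qProdC (q : ℝ) (x y : ℂ) : ℂ :=
  if q = 1 then x * y
  else (x ^ ((1 : ℂ) - (q : ℂ)) + y ^ ((1 : ℂ) - (q : ℂ)) - 1) ^ ((1 : ℂ) / (1 - (q : ℂ)))

/-- The normalizing constant `C_q = ∫ e_q^{-x²} dx`. -/
noncomputable def qC (q : ℝ) : ℝ := ∫ x : ℝ, qExp q (-x ^ 2)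

/-- The `q`-Gaussian `G_q(β; x) = (√β / C_q) e_q^{-βx²}`. -/
noncomputable def qGaussian (q β x : ℝ) : ℝ := (Real.sqrt β / qC q) * qExp q (-(β * x ^ 2))

/-- The `q`-Fourier transform `F_q[f](ξ) = ∫ f(x) e_q^{i x ξ f(x)^{q-1}} dx`. -/
noncomputable def qFourier (q : ℝ) (f : ℝ → ℝ) (ξ : ℝ) : ℂ :=
  ∫ x : ℝ, (f x : ℂ) * qExpC q (Complex.I * (x : ℂ) * (ξ : ℂ) * ((f x ^ (q - 1) : ℝ) : ℂ))

/-- The `q`-mean `μ_q(f) = ∫ x f(x)^q dx / ∫ f(x)^q dx`. -/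
noncomputable def qMean (q : ℝ) (f : ℝ → ℝ) : ℝ :=
  (∫ x : ℝ, x * f x ^ q) / (∫ x : ℝ, f x ^ q)

/-- The `q`-variance `σ_q²(f) = ∫ (x-μ_q(f))² f(x)^q dx / ∫ f(x)^q dx`. -/
noncomputable def qVar (q : ℝ) (f : ℝ → ℝ) : ℝ :=
  (∫ x : ℝ, (x - qMean q f) ^ 2 * f x ^ q) / (∫ x : ℝ, f x ^ q)

/-- Iterated `q`-product `w ⊗_q ⋯ ⊗_q w` (`N` factors). -/
noncomputable def qProdPow (q : ℝ) (w : ℂ) : ℕ → ℂ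
  | 0 => 1
  | 1 => w
  | n + 2 => qProdC q w (qProdPow q w (n + 1))

/-- `z(s) = (1+s)/(3-s)`. -/
noncomputable def zmap (s : ℝ) : ℝ := (1 + s) / (3 - s)

/-- The inverse of `z`: `z⁻¹(t) = (3t-1)/(1+t)`. -/
noncomputable def zinvmap (t : ℝ) : ℝ := (3 * t - 1) / (1 + t)

open Set

lemma realBeta (u v : ℝ) (hu : 0 < u) (hv : 0 < v) :
    IntervalIntegrable (fun x : ℝ => x ^ (u - 1) * (1 - x) ^ (v - 1)) volume 0 1 ∧
      ∫ x in (0:ℝ)..1, x ^ (u - 1) * (1 - x) ^ (v - 1)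
        = Real.Gamma u * Real.Gamma v / Real.Gamma (u + v) := by
  have hconv := Complex.betaIntegral_convergent (u := (u:ℂ)) (v := (v:ℂ)) (by simpa) (by simpa)
  have heq : ∀ x ∈ Set.uIcc (0:ℝ) 1,
      ((x : ℂ) ^ ((u:ℂ) - 1) * (1 - (x:ℂ)) ^ ((v:ℂ) - 1))
        = ((x ^ (u - 1) * (1 - x) ^ (v - 1) : ℝ) : ℂ) := by
    intro x hx
    rw [Set.uIcc_of_le (by norm_num)] at hx
    have hx0 : (0:ℝ) ≤ x := hx.1
    have hx1 : (0:ℝ) ≤ 1 - x := by linarith [hx.2]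
    push_cast
    rw [Complex.ofReal_cpow hx0, Complex.ofReal_cpow hx1]
    push_cast
    ring
  have hval : ((∫ x in (0:ℝ)..1, x ^ (u - 1) * (1 - x) ^ (v - 1) : ℝ) : ℂ)
      = Complex.betaIntegral u v := by
    rw [Complex.betaIntegral, intervalIntegral.integral_congr heq,
      intervalIntegral.integral_ofReal]
  constructor
  · apply hconv.norm.congr
    intro x hx
    rw [Set.uIoc_of_le (by norm_num : (0:ℝ) ≤ 1)] at hx
    have hx0 : (0:ℝ) ≤ x := hx.1.le
    have hx1 : (0:ℝ) ≤ 1 - x := by linarith [hx.2]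
    have := heq x (by rw [Set.uIcc_of_le (by norm_num)]; exact ⟨hx0, hx.2⟩)
    beta_reduce
    rw [this, Complex.norm_real, Real.norm_eq_abs, abs_of_nonneg (by positivity)]
  · have hG := Complex.Gamma_mul_Gamma_eq_betaIntegral
      (s := (u:ℂ)) (t := (v:ℂ)) (by simpa) (by simpa)
    have hne : Complex.Gamma ((u:ℂ) + v) ≠ 0 := by
      apply Complex.Gamma_ne_zero_of_re_pos
      simp [hu, hv]
      positivity
    rw [← Complex.ofReal_inj, hval, Complex.ofReal_div, Complex.ofReal_mul,
      ← Complex.Gamma_ofReal u, ← Complex.Gamma_ofReal v, ← Complex.Gamma_ofReal (u + v),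
      Complex.ofReal_add, eq_div_iff hne, hG]
    ring

lemma halfline (s : ℝ) (hs : 1 / 2 < s) :
    IntegrableOn (fun x : ℝ => (1 + x ^ 2) ^ (-s)) (Ioi 0) ∧
      ∫ x in Ioi (0:ℝ), (1 + x ^ 2) ^ (-s)
        = Real.Gamma (s - 1/2) * Real.Gamma (1/2) / (2 * Real.Gamma s) := by
  set g : ℝ → ℝ := fun y => y ^ (s - 1/2 - 1) * (1 - y) ^ ((1:ℝ)/2 - 1) with hg
  set f : ℝ → ℝ := fun x => (1 + x ^ 2)⁻¹ with hf
  set f' : ℝ → ℝ := fun x => -(2 * x) / (1 + x ^ 2) ^ 2 with hf'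
  have hpos : ∀ x : ℝ, (0:ℝ) < 1 + x ^ 2 := fun x => by positivity
  have hderiv : ∀ x ∈ Ioi (0:ℝ), HasDerivWithinAt f (f' x) (Ioi 0) x := by
    intro x hx
    have h1 : HasDerivAt (fun x : ℝ => 1 + x ^ 2) (2 * x) x := by
      simpa using ((hasDerivAt_pow 2 x).const_add 1)
    have := h1.inv (hpos x).ne'
    exact this.hasDerivWithinAt
  have hinj : InjOn f (Ioi 0) := by
    intro x hx y hy hxy
    simp only [hf, inv_inj] at hxy
    have hx0 : (0:ℝ) < x := hx
    have hy0 : (0:ℝ) < y := hy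
    nlinarith [sq_nonneg (x - y), sq_nonneg (x + y)]
  have himg : f '' Ioi 0 = Ioo (0:ℝ) 1 := by
    ext y
    constructor
    · rintro ⟨x, hx, rfl⟩
      have hx0 : (0:ℝ) < x := hx
      constructor
      · positivity
      · rw [inv_lt_one_iff₀]; right; nlinarith
    · rintro ⟨hy0, hy1⟩
      refine ⟨Real.sqrt (y⁻¹ - 1), ?_, ?_⟩
      · have : (1:ℝ) < y⁻¹ := (one_lt_inv_iff₀).mpr ⟨hy0, hy1⟩
        exact Real.sqrt_pos.mpr (by linarith)
      · have h1 : (0:ℝ) ≤ y⁻¹ - 1 := by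
          have : (1:ℝ) < y⁻¹ := (one_lt_inv_iff₀).mpr ⟨hy0, hy1⟩
          linarith
        simp only [hf, Real.sq_sqrt h1]
        field_simp
        ring
  have hcv := integral_image_eq_integral_abs_deriv_smul measurableSet_Ioi hderiv hinj g
  have hiff := integrableOn_image_iff_integrableOn_abs_deriv_smul measurableSet_Ioi hderiv hinj g
  rw [himg] at hcv hiff
  -- pointwise identity on Ioi 0
  have hpt : ∀ x ∈ Ioi (0:ℝ), |f' x| • g (f x) = 2 * (1 + x ^ 2) ^ (-s) := by
    intro x hx
    have hx0 : (0:ℝ) < x := hx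
    have hA : (0:ℝ) < 1 + x ^ 2 := hpos x
    have h1 : (1:ℝ) - (1 + x ^ 2)⁻¹ = x ^ 2 / (1 + x ^ 2) := by field_simp; ring
    have h2 : ((1 + x ^ 2)⁻¹ : ℝ) ^ (s - 1/2 - 1) = (1 + x ^ 2) ^ ((3:ℝ)/2 - s) := by
      rw [Real.inv_rpow hA.le, ← Real.rpow_neg hA.le]
      congr 1
      ring
    have habs : |f' x| = 2 * x / (1 + x ^ 2) ^ 2 := by
      simp only [hf']
      rw [abs_div, abs_neg, abs_of_nonneg (by positivity : (0:ℝ) ≤ 2 * x),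
        abs_of_nonneg (by positivity : (0:ℝ) ≤ (1 + x ^ 2) ^ 2)]
    have e2 : ((x:ℝ) ^ 2 / (1 + x ^ 2)) ^ ((1:ℝ)/2 - 1)
        = (x ^ 2 : ℝ) ^ ((1:ℝ)/2 - 1) / (1 + x ^ 2) ^ ((1:ℝ)/2 - 1) :=
      Real.div_rpow (sq_nonneg x) hA.le _
    have e3 : ((x:ℝ) ^ 2) ^ ((1:ℝ)/2 - 1) = x⁻¹ := by
      rw [← Real.rpow_natCast x 2, ← Real.rpow_mul hx0.le]
      norm_num
      exact (Real.rpow_neg_one x)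
    have e5 : ((1 + x ^ 2 : ℝ)) ^ ((1:ℝ)/2 - 1) = ((1 + x ^ 2 : ℝ)) ^ ((1:ℝ)/2) * (1 + x^2)⁻¹ := by
      rw [← Real.rpow_neg_one (1 + x^2), ← Real.rpow_add hA]
      norm_num
    have ecomb : (1 + x^2 : ℝ) ^ ((3:ℝ)/2 - s) * (1 + x^2) ^ ((1:ℝ)/2)
        = (1 + x^2) ^ 2 * (1 + x^2) ^ (-s) := by
      rw [← Real.rpow_add hA, ← Real.rpow_natCast (1 + x^2) 2, ← Real.rpow_add hA]
      norm_num
      ring_nf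
    have hACB : (1 + x^2 : ℝ) ^ ((3:ℝ)/2 - s)
        = (1 + x^2) ^ (-s) * (1 + x^2) * (1 + x^2) ^ ((1:ℝ)/2) := by
      rw [show (3:ℝ)/2 - s = -s + 1 + 1/2 by ring, Real.rpow_add hA, Real.rpow_add hA,
        Real.rpow_one]
    rw [smul_eq_mul, habs, hg, hf]
    simp only
    rw [h1, h2, e2, e3, e5, hACB]
    have hAne : (1 + x^2 : ℝ) ≠ 0 := hA.ne'
    have hCne : ((1 + x^2 : ℝ) ^ ((1:ℝ)/2)) ≠ 0 := (Real.rpow_pos_of_pos hA _).ne'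
    field_simp
  -- Beta side
  have hbeta := realBeta (s - 1/2) (1/2) (by linarith) (by norm_num)
  have hs2 : s - 1/2 + 1/2 = s := by ring
  have hgIoo : IntegrableOn g (Ioo (0:ℝ) 1) := by
    have := (intervalIntegrable_iff_integrableOn_Ioc_of_le (by norm_num : (0:ℝ) ≤ 1)).mp hbeta.1
    exact this.mono_set Ioo_subset_Ioc_self
  have hint2 : IntegrableOn (fun x : ℝ => 2 * (1 + x ^ 2) ^ (-s)) (Ioi 0) :=
    (hiff.mp hgIoo).congr_fun hpt measurableSet_Ioi
  have hint : IntegrableOn (fun x : ℝ => (1 + x ^ 2) ^ (-s)) (Ioi 0) := by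
    have := hint2.const_mul (2⁻¹ : ℝ)
    simpa [← mul_assoc, IntegrableOn] using this
  refine ⟨hint, ?_⟩
  have hval : ∫ x in Ioo (0:ℝ) 1, g x = Real.Gamma (s - 1/2) * Real.Gamma (1/2) / Real.Gamma s := by
    rw [← MeasureTheory.integral_Ioc_eq_integral_Ioo,
      ← intervalIntegral.integral_of_le (by norm_num : (0:ℝ) ≤ 1)]
    rw [hbeta.2, hs2]
  have hval2 : ∫ x in Ioi (0:ℝ), |f' x| • g (f x) = 2 * ∫ x in Ioi (0:ℝ), (1 + x ^ 2) ^ (-s) := by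
    rw [setIntegral_congr_fun measurableSet_Ioi hpt, integral_const_mul]
  have hh : Real.Gamma (s - 1/2) * Real.Gamma (1/2) / Real.Gamma s
      = 2 * ∫ x in Ioi (0:ℝ), (1 + x ^ 2) ^ (-s) := by
    rw [← hval, hcv, hval2]
  have hG : 0 < Real.Gamma s := Real.Gamma_pos_of_pos (by linarith)
  rw [eq_div_iff (by positivity : (2:ℝ) * Real.Gamma s ≠ 0)]
  rw [div_eq_iff hG.ne'] at hh
  linear_combination -hh

lemma wholeline (s : ℝ) (hs : 1 / 2 < s) :
    Integrable (fun x : ℝ => (1 + x ^ 2) ^ (-s)) ∧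
      ∫ x : ℝ, (1 + x ^ 2) ^ (-s) = Real.sqrt π * Real.Gamma (s - 1/2) / Real.Gamma s := by
  obtain ⟨hIoi, hIval⟩ := halfline s hs
  have hIic : IntegrableOn (fun x : ℝ => (1 + x ^ 2) ^ (-s)) (Iic 0) := by
    rw [← Measure.map_neg_eq_self (volume : Measure ℝ)]
    have m : MeasurableEmbedding fun x : ℝ => -x := (Homeomorph.neg ℝ).measurableEmbedding
    rw [m.integrableOn_map_iff]
    simp_rw [Function.comp_def, neg_sq, neg_preimage, neg_Iic, neg_zero]
    exact Iff.mpr integrableOn_Ici_iff_integrableOn_Ioi hIoi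
  have hint : Integrable (fun x : ℝ => (1 + x ^ 2) ^ (-s)) := by
    have := hIic.union hIoi
    rwa [Iic_union_Ioi, integrableOn_univ] at this
  refine ⟨hint, ?_⟩
  have habs : (fun x : ℝ => (1 + x ^ 2) ^ (-s))
      = fun x : ℝ => (fun y : ℝ => (1 + y ^ 2) ^ (-s)) |x| := by
    funext x; simp [sq_abs]
  have h2 := integral_comp_abs (f := fun y : ℝ => (1 + y ^ 2) ^ (-s))
  rw [habs, h2, hIval, Real.Gamma_one_half_eq]
  field_simp


/-- For `1 < q < 3`, the integral `C_q = ∫ e_q^{-x²} dx` converges and equals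
`√π Γ((3-q)/(2(q-1))) / (√(q-1) Γ(1/(q-1)))`. -/
theorem qC_eq_of_one_lt_q (q : ℝ) (hq1 : 1 < q) (hq3 : q < 3) :
    Integrable (fun x : ℝ => qExp q (-x ^ 2)) ∧
      qC q = Real.sqrt π * Real.Gamma ((3 - q) / (2 * (q - 1))) /
        (Real.sqrt (q - 1) * Real.Gamma (1 / (q - 1))) := by
  have hq1' : q ≠ 1 := ne_of_gt hq1
  have hq0 : (0:ℝ) < q - 1 := by linarith
  set s : ℝ := 1 / (q - 1) with hsdef
  have hs : 1 / 2 < s := one_div_lt_one_div_of_lt hq0 (by linarith)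
  set a : ℝ := Real.sqrt (q - 1) with hadef
  have ha : 0 < a := Real.sqrt_pos.mpr hq0
  have ha2 : a ^ 2 = q - 1 := Real.sq_sqrt hq0.le
  have hqe : (fun x : ℝ => qExp q (-x ^ 2))
      = fun x : ℝ => (fun y : ℝ => (1 + y ^ 2) ^ (-s)) (a * x) := by
    funext x
    simp only [qExp, if_neg hq1']
    have h1 : 1 + (1 - q) * (-x ^ 2) = 1 + (a * x) ^ 2 := by rw [mul_pow, ha2]; ring
    rw [h1, max_eq_left (by positivity)]
    congr 1
    rw [hsdef, show (1:ℝ) - q = -(q - 1) by ring, div_neg]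
  obtain ⟨hint, hval⟩ := wholeline s hs
  constructor
  · rw [hqe]
    exact (MeasureTheory.integrable_comp_mul_left_iff _ ha.ne').mpr hint
  · have h3 := MeasureTheory.Measure.integral_comp_mul_left (fun y : ℝ => (1 + y ^ 2) ^ (-s)) a
    rw [qC, hqe, h3, hval, smul_eq_mul, abs_of_pos (inv_pos.mpr ha)]
    have hexp : s - 1 / 2 = (3 - q) / (2 * (q - 1)) := by
      rw [hsdef]; field_simp; ring
    rw [hexp]
    have hGs : 0 < Real.Gamma s := Real.Gamma_pos_of_pos (by positivity)
    field_simp
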